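/- Let t* ∈ (0, ∞) be finite, let c1, c5 > 0, and let φ : [0, t*) → ℝ be continuous on [0, t*), differentiable on (0, t*), with φ(0) > 0, φ(t) > 0 for all t, φ(t) → ∞ as t → t*⁻, and φ'(t) ≤ c1·φ(t) + c5·φ(t)² for all t ∈ (0, t*). Then t* ≥ (1/c1)·log(1 + (c1/c5)·φ(0)⁻¹). -/

import Mathlib

open Real Set Filter MeasureTheory

/-- ODE comparison core of Theorem 3.2 (lower bound of the blow-up time in 2D):
if `φ > 0` blows up at the finite time `tstar` and satisfies
`φ' ≤ c1 φ + c5 φ²` on `(0, tstar)`, then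
`tstar ≥ (1/c1) log (1 + (c1/c5) φ(0)⁻¹)`. -/
theorem blow_up_time_lower_bound_2D
    (tstar c1 c5 : ℝ) (htstar : 0 < tstar) (hc1 : 0 < c1) (hc5 : 0 < c5)
    (φ : ℝ → ℝ)
    (hcont : ContinuousOn φ (Ico 0 tstar))
    (hdiff : ∀ t ∈ Ioo 0 tstar, DifferentiableAt ℝ φ t)
    (hφ0 : 0 < φ 0)
    (hpos : ∀ t ∈ Ico 0 tstar, 0 < φ t)
    (hblow : Tendsto φ (nhdsWithin tstar (Iio tstar)) atTop)
    (hineq : ∀ t ∈ Ioo 0 tstar, deriv φ t ≤ c1 * φ t + c5 * φ t ^ 2) :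
    tstar ≥ 1 / c1 * Real.log (1 + c1 / c5 * (φ 0)⁻¹) := by
  set a : ℝ := c1 / c5 with ha
  have ha0 : 0 < a := div_pos hc1 hc5
  set g : ℝ → ℝ := fun t => t + 1 / c1 * Real.log (1 + a * (φ t)⁻¹) with hg
  -- positivity of the log argument on Ico
  have harg : ∀ t ∈ Ico 0 tstar, 0 < 1 + a * (φ t)⁻¹ := by
    intro t ht
    have := hpos t ht
    positivity
  -- derivative of g at interior points
  have hgderiv : ∀ t ∈ Ioo 0 tstar,
      HasDerivAt g (1 + 1 / c1 * ((a * (-(deriv φ t) / (φ t) ^ 2)) / (1 + a * (φ t)⁻¹))) t := by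
    intro t ht
    have hy : HasDerivAt φ (deriv φ t) t := (hdiff t ht).hasDerivAt
    have hyne : φ t ≠ 0 := ne_of_gt (hpos t ⟨le_of_lt ht.1, ht.2⟩)
    have hinv : HasDerivAt (fun s => (φ s)⁻¹) (-(deriv φ t) / (φ t) ^ 2) t := hy.inv hyne
    have hmul : HasDerivAt (fun s => 1 + a * (φ s)⁻¹) (a * (-(deriv φ t) / (φ t) ^ 2)) t := by
      simpa using ((hinv.const_mul a).const_add 1)
    have hlogne : (1 : ℝ) + a * (φ t)⁻¹ ≠ 0 :=
      ne_of_gt (harg t ⟨le_of_lt ht.1, ht.2⟩)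
    have hlog := hmul.log hlogne
    simpa [hg, Pi.add_def] using (hasDerivAt_id t).add (hlog.const_mul (1 / c1))
  -- derivative is nonnegative
  have hderiv_nonneg : ∀ t ∈ Ioo 0 tstar,
      0 ≤ 1 + 1 / c1 * ((a * (-(deriv φ t) / (φ t) ^ 2)) / (1 + a * (φ t)⁻¹)) := by
    intro t ht
    have hy : 0 < φ t := hpos t ⟨le_of_lt ht.1, ht.2⟩
    have hd : deriv φ t ≤ c1 * φ t + c5 * φ t ^ 2 := hineq t ht
    have hA : 0 < 1 + a * (φ t)⁻¹ := harg t ⟨le_of_lt ht.1, ht.2⟩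
    rw [ha] at *
    have h1 : (c1 / c5 * (-(deriv φ t) / (φ t) ^ 2)) / (1 + c1 / c5 * (φ t)⁻¹)
        = -(c1 * deriv φ t) / (c5 * (φ t) ^ 2 + c1 * φ t) := by
      field_simp
    rw [h1]
    have hden : 0 < c5 * (φ t) ^ 2 + c1 * φ t := by positivity
    have hX : -(c1 * deriv φ t) / (c5 * φ t ^ 2 + c1 * φ t) ≥ -c1 := by
      rw [ge_iff_le, le_div_iff₀ hden]
      nlinarith
    have h2 : 1 / c1 * (-c1) ≤ 1 / c1 * (-(c1 * deriv φ t) / (c5 * φ t ^ 2 + c1 * φ t)) :=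
      mul_le_mul_of_nonneg_left hX (by positivity)
    have h3 : 1 / c1 * (-c1) = -1 := by field_simp
    linarith
  -- g is monotone on Ico 0 tstar
  have hgcont : ContinuousOn g (Ico 0 tstar) := by
    apply continuousOn_id.add
    apply ContinuousOn.mul continuousOn_const
    apply ContinuousOn.log
    · exact continuousOn_const.add (continuousOn_const.mul (hcont.inv₀
        (fun t ht => ne_of_gt (hpos t ht))))
    · intro t ht; exact ne_of_gt (harg t ht)
  have hmono : MonotoneOn g (Ico 0 tstar) := by
    apply monotoneOn_of_deriv_nonneg (convex_Ico 0 tstar) hgcont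
    · intro t ht
      rw [interior_Ico] at ht
      exact (hgderiv t ht).differentiableAt.differentiableWithinAt
    · intro t ht
      rw [interior_Ico] at ht
      rw [(hgderiv t ht).deriv]
      exact hderiv_nonneg t ht
  -- limit of g as t → tstar⁻ is tstar
  have hglim : Tendsto g (nhdsWithin tstar (Iio tstar)) (nhds tstar) := by
    have hinv : Tendsto (fun t => (φ t)⁻¹) (nhdsWithin tstar (Iio tstar)) (nhds 0) :=
      tendsto_inv_atTop_zero.comp hblow
    have hlog : Tendsto (fun t => 1 / c1 * Real.log (1 + a * (φ t)⁻¹))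
        (nhdsWithin tstar (Iio tstar)) (nhds (1 / c1 * Real.log (1 + a * 0))) := by
      apply Tendsto.const_mul
      apply (Real.continuousAt_log (by norm_num)).tendsto.comp
      simpa using (tendsto_const_nhds.add (hinv.const_mul a))
    have hid : Tendsto (fun t : ℝ => t) (nhdsWithin tstar (Iio tstar)) (nhds tstar) :=
      tendsto_id.mono_left nhdsWithin_le_nhds
    have := hid.add hlog
    simpa [hg] using this
  -- eventually g 0 ≤ g t
  have hev : ∀ᶠ t in nhdsWithin tstar (Iio tstar), g 0 ≤ g t := by
    have h1 : ∀ᶠ t in nhdsWithin tstar (Iio tstar), t ∈ Ioo 0 tstar := by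
      have : Ioo 0 tstar ∈ nhdsWithin tstar (Iio tstar) := by
        apply mem_nhdsWithin.mpr
        exact ⟨Ioi 0, isOpen_Ioi, htstar, fun x hx => ⟨hx.1, hx.2⟩⟩
      exact this
    filter_upwards [h1] with t ht
    exact hmono ⟨le_refl 0, htstar⟩ ⟨le_of_lt ht.1, ht.2⟩ (le_of_lt ht.1)
  have hne : (nhdsWithin tstar (Iio tstar)).NeBot := by
    infer_instance
  have hfinal : g 0 ≤ tstar := ge_of_tendsto hglim hev
  have heq : g 0 = 1 / c1 * Real.log (1 + c1 / c5 * (φ 0)⁻¹) := by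
    simp [hg, ha]
  rw [ge_iff_le, ← heq]
  exact hfinal
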